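/- If (P_n)_{n≥1} are i.i.d. random variables in [0,1] with mean p̄ = E[P_1], and splitting proportions are P_{n,k} = P_n, then almost surely the random empirical distributions G_n converge weakly on [0,1] to p̄·δ_0 + (1−p̄)·δ_1. -/

import Mathlib

open MeasureTheory ProbabilityTheory Filter Topology

set_option maxHeartbeats 1000000

open Finset

section Det

variable (a : ℕ → ℕ → ℝ) (p : ℕ → ℝ)

/-- bounds and monotonicity -/
lemma frag_aux (hp : ∀ n, 0 ≤ p n ∧ p n ≤ 1)
    (h0 : ∀ n, a n 0 = 0) (h1 : ∀ n, a n (n+1) = 1)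
    (hrec : ∀ n j, j ≤ n → a (n+1) (j+1) = p (n+1) * a n j + (1 - p (n+1)) * a n (j+1)) :
    ∀ n, (∀ k, k ≤ n+1 → 0 ≤ a n k ∧ a n k ≤ 1) ∧ (∀ k, k ≤ n → a n k ≤ a n (k+1)) := by
  intro n
  induction n with
  | zero =>
    constructor
    · intro k hk
      interval_cases k
      · simp [h0]
      · have := h1 0; simp at this; simp [this]
    · intro k hk
      interval_cases k
      have := h1 0; simp at this; simp [h0, this]
  | succ n ih =>
    obtain ⟨ihb, ihm⟩ := ih
    have hbnd : ∀ k, k ≤ n+2 → 0 ≤ a (n+1) k ∧ a (n+1) k ≤ 1 := by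
      intro k hk
      rcases Nat.eq_zero_or_pos k with hk0 | hk1
      · subst hk0; simp [h0]
      rcases Nat.lt_or_ge k (n+2) with hklt | hkge
      · obtain ⟨j, rfl⟩ := Nat.exists_eq_succ_of_ne_zero (by omega : k ≠ 0)
        rw [hrec n j (by omega)]
        have b1 := ihb j (by omega)
        have b2 := ihb (j+1) (by omega)
        have hp' := hp (n+1)
        constructor
        · nlinarith [b1.1, b2.1, hp'.1, hp'.2]
        · nlinarith [b1.2, b2.2, hp'.1, hp'.2]
      · have : k = n + 2 := le_antisymm hk hkge
        subst this
        have := h1 (n+1); simp [this]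
    refine ⟨hbnd, ?_⟩
    intro k hk
    rcases Nat.eq_zero_or_pos k with hk0 | hk1
    · subst hk0
      rw [h0]
      exact (hbnd 1 (by omega)).1
    rcases Nat.lt_or_ge k (n+1) with hklt | hkge
    · obtain ⟨j, rfl⟩ := Nat.exists_eq_succ_of_ne_zero (by omega : k ≠ 0)
      rw [hrec n j (by omega), hrec n (j+1) (by omega)]
      have h1' := ihm j (by omega)
      have h2' := ihm (j+1) (by omega)
      have hp' := hp (n+1)
      nlinarith [h1', h2', hp'.1, hp'.2]
    · have : k = n + 1 := le_antisymm hk hkge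
      subst this
      rw [h1 (n+1)]
      exact (hbnd (n+1) (by omega)).2


/-- first moment identity -/
lemma frag_m (hp : ∀ n, 0 ≤ p n ∧ p n ≤ 1)
    (h0 : ∀ n, a n 0 = 0) (h1 : ∀ n, a n (n+1) = 1)
    (hrec : ∀ n j, j ≤ n → a (n+1) (j+1) = p (n+1) * a n j + (1 - p (n+1)) * a n (j+1)) :
    ∀ n, ∑ i ∈ range n, (1 - a n (i+1)) = ∑ i ∈ range n, p (i+1) := by
  intro n
  induction n with
  | zero => simp
  | succ n ih =>
    have key : ∀ i ∈ range (n+1), (1 - a (n+1) (i+1))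
        = p (n+1) * (1 - a n i) + (1 - p (n+1)) * (1 - a n (i+1)) := by
      intro i hi
      rw [hrec n i (by simpa using Nat.lt_succ_iff.mp (mem_range.mp hi))]
      ring
    rw [Finset.sum_congr rfl key, Finset.sum_add_distrib, ← Finset.mul_sum, ← Finset.mul_sum]
    rw [Finset.sum_range_succ' (fun i => (1 : ℝ) - a n i) n, Finset.sum_range_succ (fun i => (1 : ℝ) - a n (i+1)) n]
    rw [h0, h1, ih, Finset.sum_range_succ (fun i => p (i+1)) n]
    ring

/-- second moment identity -/
lemma frag_q (hp : ∀ n, 0 ≤ p n ∧ p n ≤ 1)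
    (h0 : ∀ n, a n 0 = 0) (h1 : ∀ n, a n (n+1) = 1)
    (hrec : ∀ n j, j ≤ n → a (n+1) (j+1) = p (n+1) * a n j + (1 - p (n+1)) * a n (j+1)) :
    ∀ n, ∑ i ∈ range n, (2*(i:ℝ)+1) * (1 - a n (i+1))
      = (∑ i ∈ range n, p (i+1) * (1 - p (i+1))) + (∑ i ∈ range n, p (i+1))^2 := by
  intro n
  induction n with
  | zero => simp
  | succ n ih =>
    have key : ∀ i ∈ range (n+1), (2*(i:ℝ)+1) * (1 - a (n+1) (i+1))
        = p (n+1) * ((2*(i:ℝ)+1) * (1 - a n i)) + (1 - p (n+1)) * ((2*(i:ℝ)+1) * (1 - a n (i+1))) := by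
      intro i hi
      rw [hrec n i (by simpa using Nat.lt_succ_iff.mp (mem_range.mp hi))]
      ring
    rw [Finset.sum_congr rfl key, Finset.sum_add_distrib, ← Finset.mul_sum, ← Finset.mul_sum]
    rw [Finset.sum_range_succ' (fun i => (2*(i:ℝ)+1) * (1 - a n i)) n,
        Finset.sum_range_succ (fun i => (2*(i:ℝ)+1) * (1 - a n (i+1))) n]
    rw [h0, h1]
    have expand : ∀ i ∈ range n, (2*((i+1 : ℕ):ℝ)+1) * (1 - a n (i+1))
        = (2*(i:ℝ)+1) * (1 - a n (i+1)) + 2 * (1 - a n (i+1)) := by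
      intro i hi; push_cast; ring
    rw [Finset.sum_congr rfl expand, Finset.sum_add_distrib, ih, ← Finset.mul_sum,
        frag_m a p hp h0 h1 hrec n]
    rw [Finset.sum_range_succ (fun i => p (i+1) * (1 - p (i+1))) n,
        Finset.sum_range_succ (fun i => p (i+1)) n]
    push_cast
    ring


lemma sum_odd_sq (m : ℕ) : ∑ i ∈ range m, (2*(i:ℝ)+1) = (m:ℝ)^2 := by
  induction m with
  | zero => simp
  | succ m ih => rw [Finset.sum_range_succ, ih]; push_cast; ring

/-- variance identity -/
lemma frag_var (hp : ∀ n, 0 ≤ p n ∧ p n ≤ 1)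
    (h0 : ∀ n, a n 0 = 0) (h1 : ∀ n, a n (n+1) = 1)
    (hrec : ∀ n j, j ≤ n → a (n+1) (j+1) = p (n+1) * a n j + (1 - p (n+1)) * a n (j+1))
    (n : ℕ) :
    ∑ i ∈ range (n+1), ((i:ℝ) - ∑ i ∈ range n, p (i+1))^2 * (a n (i+1) - a n i)
      = ∑ i ∈ range n, p (i+1) * (1 - p (i+1)) := by
  set M : ℝ := ∑ i ∈ range n, p (i+1) with hM
  have S0 : ∑ i ∈ range (n+1), (a n (i+1) - a n i) = 1 := by
    rw [Finset.sum_range_sub (a n), h0, h1]; ring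
  have hm := frag_m a p hp h0 h1 hrec n
  have hsum_a : ∑ i ∈ range n, a n (i+1) = (n:ℝ) - M := by
    have : ∑ i ∈ range n, ((1:ℝ) - a n (i+1)) = (n:ℝ) - ∑ i ∈ range n, a n (i+1) := by
      rw [Finset.sum_sub_distrib]; simp
    rw [hM, ← hm, this]; ring
  have S1 : ∑ i ∈ range (n+1), (i:ℝ) * (a n (i+1) - a n i) = M := by
    have key : ∀ i ∈ range (n+1), (i:ℝ) * (a n (i+1) - a n i)
        = (((i+1 : ℕ):ℝ) * a n (i+1) - (i:ℝ) * a n i) - a n (i+1) := by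
      intro i _; push_cast; ring
    rw [Finset.sum_congr rfl key, Finset.sum_sub_distrib,
        Finset.sum_range_sub (fun i => (i:ℝ) * a n i),
        Finset.sum_range_succ (fun i => a n (i+1)) n, hsum_a, h0, h1]
    push_cast; ring
  have hq := frag_q a p hp h0 h1 hrec n
  have S2 : ∑ i ∈ range (n+1), (i:ℝ)^2 * (a n (i+1) - a n i)
      = (∑ i ∈ range n, p (i+1) * (1 - p (i+1))) + M^2 := by
    have key : ∀ i ∈ range (n+1), (i:ℝ)^2 * (a n (i+1) - a n i)
        = (((i+1 : ℕ):ℝ)^2 * a n (i+1) - (i:ℝ)^2 * a n i) - (2*(i:ℝ)+1) * a n (i+1) := by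
      intro i _; push_cast; ring
    have split : ∀ i ∈ range (n+1), (2*(i:ℝ)+1) * a n (i+1)
        = (2*(i:ℝ)+1) - (2*(i:ℝ)+1) * (1 - a n (i+1)) := by
      intro i _; ring
    rw [Finset.sum_congr rfl key, Finset.sum_sub_distrib,
        Finset.sum_range_sub (fun i => (i:ℝ)^2 * a n i),
        Finset.sum_congr rfl split, Finset.sum_sub_distrib, sum_odd_sq,
        Finset.sum_range_succ (fun i => (2*(i:ℝ)+1) * (1 - a n (i+1))) n, hq, h0, h1]
    push_cast; ring
  have key : ∀ i ∈ range (n+1), ((i:ℝ) - M)^2 * (a n (i+1) - a n i)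
      = (i:ℝ)^2 * (a n (i+1) - a n i) - 2*M*((i:ℝ) * (a n (i+1) - a n i))
        + M^2 * (a n (i+1) - a n i) := by
    intro i _; ring
  rw [Finset.sum_congr rfl key, Finset.sum_add_distrib, Finset.sum_sub_distrib,
      ← Finset.mul_sum, ← Finset.mul_sum, S0, S1, S2]
  ring

/-- Chebyshev, lower tail -/
lemma frag_cheb_low (hp : ∀ n, 0 ≤ p n ∧ p n ≤ 1)
    (h0 : ∀ n, a n 0 = 0) (h1 : ∀ n, a n (n+1) = 1)
    (hrec : ∀ n j, j ≤ n → a (n+1) (j+1) = p (n+1) * a n j + (1 - p (n+1)) * a n (j+1))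
    (n K : ℕ) (hK : K ≤ n) (hKM : (K:ℝ) ≤ ∑ i ∈ range n, p (i+1)) :
    ((∑ i ∈ range n, p (i+1)) - K)^2 * a n (K+1) ≤ ∑ i ∈ range n, p (i+1) * (1 - p (i+1)) := by
  set M : ℝ := ∑ i ∈ range n, p (i+1) with hM
  have hmono := (frag_aux a p hp h0 h1 hrec n).2
  have hd : ∀ i ∈ range (n+1), 0 ≤ a n (i+1) - a n i := by
    intro i hi
    have := hmono i (Nat.lt_succ_iff.mp (mem_range.mp hi))
    linarith
  calc (M - K)^2 * a n (K+1)
      = ∑ i ∈ range (K+1), (M - (K:ℝ))^2 * (a n (i+1) - a n i) := by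
        rw [← Finset.mul_sum, Finset.sum_range_sub (a n), h0]; ring
    _ ≤ ∑ i ∈ range (K+1), ((i:ℝ) - M)^2 * (a n (i+1) - a n i) := by
        apply Finset.sum_le_sum
        intro i hi
        have hiK : (i:ℝ) ≤ K := by exact_mod_cast Nat.lt_succ_iff.mp (mem_range.mp hi)
        have hd' := hd i (mem_range.mpr (by have := mem_range.mp hi; omega))
        have : (M - (K:ℝ))^2 ≤ ((i:ℝ) - M)^2 := by nlinarith
        nlinarith
    _ ≤ ∑ i ∈ range (n+1), ((i:ℝ) - M)^2 * (a n (i+1) - a n i) := by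
        apply Finset.sum_le_sum_of_subset_of_nonneg
        · exact Finset.range_subset_range.mpr (by omega)
        · intro i hi _
          exact mul_nonneg (sq_nonneg _) (hd i hi)
    _ = ∑ i ∈ range n, p (i+1) * (1 - p (i+1)) := frag_var a p hp h0 h1 hrec n

/-- Chebyshev, upper tail -/
lemma frag_cheb_high (hp : ∀ n, 0 ≤ p n ∧ p n ≤ 1)
    (h0 : ∀ n, a n 0 = 0) (h1 : ∀ n, a n (n+1) = 1)
    (hrec : ∀ n j, j ≤ n → a (n+1) (j+1) = p (n+1) * a n j + (1 - p (n+1)) * a n (j+1))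
    (n K : ℕ) (hK : K ≤ n+1) (hKM : (∑ i ∈ range n, p (i+1)) ≤ (K:ℝ)) :
    ((K:ℝ) - ∑ i ∈ range n, p (i+1))^2 * (1 - a n K) ≤ ∑ i ∈ range n, p (i+1) * (1 - p (i+1)) := by
  set M : ℝ := ∑ i ∈ range n, p (i+1) with hM
  have hmono := (frag_aux a p hp h0 h1 hrec n).2
  have hd : ∀ i ∈ range (n+1), 0 ≤ a n (i+1) - a n i := by
    intro i hi
    have := hmono i (Nat.lt_succ_iff.mp (mem_range.mp hi))
    linarith
  have htel : ∑ i ∈ Finset.Ico K (n+1), (a n (i+1) - a n i) = 1 - a n K := by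
    rw [Finset.sum_Ico_eq_sub _ hK, Finset.sum_range_sub (a n), Finset.sum_range_sub (a n), h1]
    ring
  calc ((K:ℝ) - M)^2 * (1 - a n K)
      = ∑ i ∈ Finset.Ico K (n+1), ((K:ℝ) - M)^2 * (a n (i+1) - a n i) := by
        rw [← Finset.mul_sum, htel]
    _ ≤ ∑ i ∈ Finset.Ico K (n+1), ((i:ℝ) - M)^2 * (a n (i+1) - a n i) := by
        apply Finset.sum_le_sum
        intro i hi
        have hiK : (K:ℝ) ≤ i := by exact_mod_cast (Finset.mem_Ico.mp hi).1
        have hd' := hd i (mem_range.mpr (Finset.mem_Ico.mp hi).2)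
        have : ((K:ℝ) - M)^2 ≤ ((i:ℝ) - M)^2 := by nlinarith
        nlinarith
    _ ≤ ∑ i ∈ range (n+1), ((i:ℝ) - M)^2 * (a n (i+1) - a n i) := by
        apply Finset.sum_le_sum_of_subset_of_nonneg
        · intro i hi; exact mem_range.mpr (Finset.mem_Ico.mp hi).2
        · intro i hi _
          exact mul_nonneg (sq_nonneg _) (hd i hi)
    _ = ∑ i ∈ range n, p (i+1) * (1 - p (i+1)) := frag_var a p hp h0 h1 hrec n


/-- Main deterministic estimate. -/
lemma frag_main (hp : ∀ n, 0 ≤ p n ∧ p n ≤ 1)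
    (h0 : ∀ n, a n 0 = 0) (h1 : ∀ n, a n (n+1) = 1)
    (hrec : ∀ n j, j ≤ n → a (n+1) (j+1) = p (n+1) * a n j + (1 - p (n+1)) * a n (j+1))
    (f : ℝ → ℝ) (B ε δ' q : ℝ)
    (hB : ∀ x, |f x| ≤ B) (hε : 0 < ε)
    (hδ0 : ∀ x, 0 ≤ x → x ≤ ε → |f x - f 0| ≤ δ')
    (hδ1 : ∀ x, 1 - ε ≤ x → x ≤ 1 → |f x - f 1| ≤ δ')
    (n : ℕ) :
    |∑ i ∈ range n, f (a n (i+1)) - (n:ℝ) * (q * f 0 + (1-q) * f 1)|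
      ≤ n*δ' + 2*B*(2*(Real.sqrt ((n:ℝ)/(4*ε)) + 1)+1)
        + ((Real.sqrt ((n:ℝ)/(4*ε)) + 1) + |(∑ i ∈ range n, p (i+1)) - n*q|) * (2*B) := by
  classical
  set M : ℝ := ∑ i ∈ range n, p (i+1) with hM
  set Vs : ℝ := ∑ i ∈ range n, p (i+1) * (1 - p (i+1)) with hVs
  set r : ℝ := Real.sqrt ((n:ℝ)/(4*ε)) + 1 with hr
  set t : ℕ := ⌊M - r + 1⌋₊ with ht
  have hB0 : 0 ≤ B := le_trans (abs_nonneg _) (hB 0)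
  have hδ'0 : 0 ≤ δ' := by
    have := hδ0 0 le_rfl (le_of_lt hε); simpa using this
  have hsq : 0 ≤ Real.sqrt ((n:ℝ)/(4*ε)) := Real.sqrt_nonneg _
  have hr1 : 1 ≤ r := by rw [hr]; linarith
  have hM0 : 0 ≤ M := Finset.sum_nonneg fun i _ => (hp (i+1)).1
  have hMn : M ≤ n := by
    calc M ≤ ∑ i ∈ range n, (1:ℝ) := Finset.sum_le_sum fun i _ => (hp (i+1)).2
    _ = n := by simp
  have hVs0 : 0 ≤ Vs := Finset.sum_nonneg fun i _ => by
    have := hp (i+1); nlinarith [this.1, this.2]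
  have hVsn : Vs ≤ (n:ℝ)/4 := by
    calc Vs ≤ ∑ i ∈ range n, (1/4 : ℝ) := Finset.sum_le_sum fun i _ => by
          have := hp (i+1); nlinarith [this.1, this.2, sq_nonneg (p (i+1) - 1/2)]
      _ = (n:ℝ)/4 := by simp; ring
  have hrsq : Vs ≤ ε * r^2 := by
    have h1' : Real.sqrt ((n:ℝ)/(4*ε)) ^ 2 = (n:ℝ)/(4*ε) := by
      rw [Real.sq_sqrt]
      positivity
    have h2' : ε * r^2 ≥ ε * ((n:ℝ)/(4*ε)) := by
      rw [hr]
      nlinarith [hsq]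
    have h3' : ε * ((n:ℝ)/(4*ε)) = (n:ℝ)/4 := by field_simp
    calc Vs ≤ (n:ℝ)/4 := hVsn
      _ = ε * ((n:ℝ)/(4*ε)) := h3'.symm
      _ ≤ ε * r^2 := h2'
  -- location of t
  have htlb : M - r < (t:ℝ) := by
    have := Nat.lt_floor_add_one (M - r + 1)
    push_cast at this ⊢; linarith
  have htn : t ≤ n := by
    rcases le_or_gt 0 (M - r + 1) with hc | hc
    · have h1' : (t:ℝ) ≤ M - r + 1 := Nat.floor_le hc
      have : (t:ℝ) ≤ (n:ℝ) := by linarith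
      exact_mod_cast this
    · rw [ht, Nat.floor_of_nonpos (le_of_lt hc)]; omega
  have htM : |(t:ℝ) - M| ≤ r := by
    rcases le_or_gt 0 (M - r + 1) with hc | hc
    · have h1' : (t:ℝ) ≤ M - r + 1 := Nat.floor_le hc
      rw [abs_le]; constructor <;> linarith
    · have : t = 0 := by rw [ht, Nat.floor_of_nonpos (le_of_lt hc)]
      rw [this]; simp; rw [abs_le]; constructor <;> linarith
  -- bounds on a
  have hbnd := (frag_aux a p hp h0 h1 hrec n).1
  -- per index estimates
  have hlow : ∀ i, i < n → i < t → a n (i+1) ≤ ε := by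
    intro i hin hit
    have ht1 : 1 ≤ t := by omega
    have hc : 0 ≤ M - r + 1 := by
      by_contra hc
      push_neg at hc
      rw [ht, Nat.floor_of_nonpos (le_of_lt hc)] at ht1; omega
    have hifl : (i:ℝ) + 1 ≤ (t:ℝ) := by exact_mod_cast hit
    have h1' : (t:ℝ) ≤ M - r + 1 := Nat.floor_le hc
    have hiM : (i:ℝ) ≤ M - r := by linarith
    have hcheb := frag_cheb_low a p hp h0 h1 hrec n i (by omega) (by rw [← hM]; linarith)
    rw [← hM, ← hVs] at hcheb
    have ha0 := (hbnd (i+1) (by omega)).1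
    have hMi : r ≤ M - (i:ℝ) := by linarith
    have hsq2 : r^2 ≤ (M - (i:ℝ))^2 := by nlinarith
    have hra : r^2 * a n (i+1) ≤ Vs := le_trans (by nlinarith [ha0, hsq2]) hcheb
    have hrpos : (0:ℝ) < r^2 := by nlinarith
    have ha' : a n (i+1) * r^2 ≤ ε * r^2 := by nlinarith [hra, hrsq]
    exact le_of_mul_le_mul_right (by linarith [ha']) hrpos
  have hhigh : ∀ i, i < n → M + r ≤ (i:ℝ) → 1 - ε ≤ a n (i+1) := by
    intro i hin hiM
    have hcheb := frag_cheb_high a p hp h0 h1 hrec n (i+1) (by omega)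
      (by rw [← hM]; push_cast; linarith)
    rw [← hM, ← hVs] at hcheb
    have ha1 := (hbnd (i+1) (by omega)).2
    have hcast : ((i+1 : ℕ):ℝ) = (i:ℝ) + 1 := by push_cast; ring
    rw [hcast] at hcheb
    have hKi : r ≤ ((i:ℝ)+1) - M := by linarith
    have hsq2 : r^2 ≤ (((i:ℝ)+1) - M)^2 := by nlinarith
    have hra : r^2 * (1 - a n (i+1)) ≤ Vs := le_trans (by nlinarith [ha1, hsq2]) hcheb
    have hrpos : (0:ℝ) < r^2 := by nlinarith
    have ha' : (1 - ε) * r^2 ≤ a n (i+1) * r^2 := by nlinarith [hra, hrsq]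
    exact le_of_mul_le_mul_right ha' hrpos
  -- the comparison function
  set g : ℕ → ℝ := fun i => if i < t then f 0 else f 1 with hg
  set u : ℕ := ⌈M + r⌉₊ with hu
  -- sum of |f (a n (i+1)) - g i|
  have hstep : ∀ i ∈ range n, |f (a n (i+1)) - g i|
      ≤ δ' + (if t ≤ i ∧ (i:ℝ) < M + r then 2*B else 0) := by
    intro i hi
    have hin := mem_range.mp hi
    have ha := hbnd (i+1) (by omega)
    rcases lt_or_ge i t with hit | hit
    · rw [hg]; simp only [if_pos hit]
      have := hδ0 _ ha.1 (hlow i hin hit)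
      have hcond : ¬ (t ≤ i ∧ (i:ℝ) < M + r) := by
        rintro ⟨h', _⟩; omega
      rw [if_neg hcond]; linarith
    · rw [hg]; simp only [if_neg (by omega : ¬ i < t)]
      rcases lt_or_ge (i:ℝ) (M + r) with hiM | hiM
      · rw [if_pos ⟨hit, hiM⟩]
        calc |f (a n (i+1)) - f 1| ≤ |f (a n (i+1))| + |f 1| := abs_sub _ _
          _ ≤ B + B := add_le_add (hB _) (hB _)
          _ ≤ δ' + 2*B := by linarith
      · rw [if_neg (by rintro ⟨_, h'⟩; linarith)]
        have := hδ1 _ (hhigh i hin hiM) ha.2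
        linarith
  have hsum1 : ∑ i ∈ range n, |f (a n (i+1)) - g i| ≤ n * δ' + 2*B*(2*r+1) := by
    calc ∑ i ∈ range n, |f (a n (i+1)) - g i|
        ≤ ∑ i ∈ range n, (δ' + (if t ≤ i ∧ (i:ℝ) < M + r then 2*B else 0)) :=
          Finset.sum_le_sum hstep
      _ = n * δ' + ∑ i ∈ range n, (if t ≤ i ∧ (i:ℝ) < M + r then 2*B else 0) := by
          rw [Finset.sum_add_distrib]; simp [mul_comm]
      _ ≤ n * δ' + 2*B*(2*r+1) := by
          have hsub : (range n).filter (fun i => t ≤ i ∧ (i:ℝ) < M + r) ⊆ Finset.Ico t u := by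
            intro i hi
            simp only [Finset.mem_filter, mem_range] at hi
            rw [Finset.mem_Ico]
            refine ⟨hi.2.1, ?_⟩
            rw [hu]
            exact Nat.lt_ceil.mpr hi.2.2
          have hcard : ((range n).filter (fun i => t ≤ i ∧ (i:ℝ) < M + r)).card ≤ u - t :=
            le_trans (Finset.card_le_card hsub) (le_of_eq (Nat.card_Ico t u))
          have hcard' : (((range n).filter (fun i => t ≤ i ∧ (i:ℝ) < M + r)).card : ℝ) ≤ 2*r+1 := by
            rcases le_or_gt t u with htu | htu
            · have : ((u - t : ℕ) : ℝ) = (u:ℝ) - t := by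
                push_cast [Nat.cast_sub htu]; ring
              have hub : (u:ℝ) < M + r + 1 := by
                rw [hu]
                exact Nat.ceil_lt_add_one (by linarith)
              calc (((range n).filter (fun i => t ≤ i ∧ (i:ℝ) < M + r)).card : ℝ)
                  ≤ ((u - t : ℕ) : ℝ) := by exact_mod_cast hcard
                _ = (u:ℝ) - t := this
                _ ≤ 2*r+1 := by linarith
            · have : u - t = 0 := by omega
              rw [this] at hcard
              have : (((range n).filter (fun i => t ≤ i ∧ (i:ℝ) < M + r)).card : ℝ) ≤ 0 := by
                exact_mod_cast hcard
              linarith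
          have hie : ∑ i ∈ range n, (if t ≤ i ∧ (i:ℝ) < M + r then (2*B:ℝ) else 0)
              = (((range n).filter (fun i => t ≤ i ∧ (i:ℝ) < M + r)).card : ℝ) * (2*B) := by
            rw [← Finset.sum_filter, Finset.sum_const, nsmul_eq_mul]
          rw [hie]
          have : (((range n).filter (fun i => t ≤ i ∧ (i:ℝ) < M + r)).card : ℝ) * (2*B)
              ≤ (2*r+1) * (2*B) := by
            apply mul_le_mul_of_nonneg_right hcard'
            linarith
          linarith [this]
  -- sum of g
  have hsumg : ∑ i ∈ range n, g i = (t:ℝ) * f 0 + ((n:ℝ) - t) * f 1 := by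
    have hsplit : (range n).filter (fun i => i < t) = range t := by
      ext i
      simp only [Finset.mem_filter, mem_range]
      omega
    have hsplit2 : (range n).filter (fun i => ¬ i < t) = Finset.Ico t n := by
      ext i
      simp only [Finset.mem_filter, mem_range, Finset.mem_Ico]
      omega
    rw [hg, Finset.sum_ite, hsplit, hsplit2, Finset.sum_const, Finset.sum_const]
    rw [Finset.card_range, Nat.card_Ico, nsmul_eq_mul, nsmul_eq_mul]
    have : ((n - t : ℕ) : ℝ) = (n:ℝ) - t := by
      push_cast [Nat.cast_sub htn]; ring
    rw [this]
  -- combine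
  have htri : |∑ i ∈ range n, f (a n (i+1)) - ∑ i ∈ range n, g i|
      ≤ ∑ i ∈ range n, |f (a n (i+1)) - g i| := by
    rw [← Finset.sum_sub_distrib]
    exact Finset.abs_sum_le_sum_abs _ _
  have hfinal2 : |∑ i ∈ range n, g i - (n:ℝ) * (q * f 0 + (1-q) * f 1)|
      ≤ (r + |M - n*q|) * (2*B) := by
    rw [hsumg]
    have heq : (t:ℝ) * f 0 + ((n:ℝ) - t) * f 1 - (n:ℝ) * (q * f 0 + (1-q) * f 1)
        = ((t:ℝ) - n*q) * (f 0 - f 1) := by ring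
    rw [heq, abs_mul]
    have h1' : |(t:ℝ) - n*q| ≤ r + |M - n*q| := by
      calc |(t:ℝ) - n*q| = |((t:ℝ) - M) + (M - n*q)| := by ring_nf
        _ ≤ |(t:ℝ) - M| + |M - n*q| := abs_add_le _ _
        _ ≤ r + |M - n*q| := by linarith [htM]
    have h2' : |f 0 - f 1| ≤ 2*B := by
      calc |f 0 - f 1| ≤ |f 0| + |f 1| := abs_sub _ _
        _ ≤ 2*B := by linarith [hB 0, hB 1]
    apply mul_le_mul h1' h2' (abs_nonneg _)
    positivity
  calc |∑ i ∈ range n, f (a n (i+1)) - (n:ℝ) * (q * f 0 + (1-q) * f 1)|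
      ≤ |∑ i ∈ range n, f (a n (i+1)) - ∑ i ∈ range n, g i|
        + |∑ i ∈ range n, g i - (n:ℝ) * (q * f 0 + (1-q) * f 1)| := by
        have := abs_add_le (∑ i ∈ range n, f (a n (i+1)) - ∑ i ∈ range n, g i)
          (∑ i ∈ range n, g i - (n:ℝ) * (q * f 0 + (1-q) * f 1))
        simpa using this
    _ ≤ (n * δ' + 2*B*(2*r+1)) + (r + |M - n*q|) * (2*B) := by
        linarith [le_trans htri hsum1, hfinal2]
    _ = n*δ' + 2*B*(2*r+1) + (r + |M - n*q|) * (2*B) := by ring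

end Det

open MeasureTheory ProbabilityTheory Filter Topology

lemma frag_r_over_n (ε : ℝ) (hε : 0 < ε) :
    Tendsto (fun n : ℕ => (Real.sqrt ((n:ℝ)/(4*ε)) + 1)/(n:ℝ)) atTop (𝓝 0) := by
  have h1 : Tendsto (fun n : ℕ => (1/(4*ε)) * (1/(n:ℝ))) atTop (𝓝 0) := by
    simpa using tendsto_one_div_atTop_nhds_zero_nat.const_mul (1/(4*ε))
  have h2 : Tendsto (fun n : ℕ => Real.sqrt ((1/(4*ε)) * (1/(n:ℝ)))) atTop (𝓝 0) := by
    have h2' := (Real.continuous_sqrt.tendsto' 0 0 (by simp)).comp h1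
    exact h2'
  have h3 := h2.add tendsto_one_div_atTop_nhds_zero_nat
  rw [show (0:ℝ) = 0 + 0 from by ring]
  apply Tendsto.congr' _ h3
  filter_upwards [eventually_ge_atTop 1] with n hn
  have hn0 : (0:ℝ) < (n:ℝ) := by exact_mod_cast hn
  have e1 : (1/(4*ε)) * (1/(n:ℝ)) = ((n:ℝ)/(4*ε)) * ((1/(n:ℝ))^2) := by
    field_simp
  show Real.sqrt ((1/(4*ε)) * (1/(n:ℝ))) + 1/(n:ℝ) = (Real.sqrt ((n:ℝ)/(4*ε)) + 1)/(n:ℝ)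
  rw [e1, Real.sqrt_mul (by positivity), Real.sqrt_sq (by positivity)]
  field_simp

/-- Random stratified fragmentation: with i.i.d. splitting proportions `(P_n)` in `[0,1]`
of mean `p̄`, almost surely the random empirical distributions of break points converge
weakly on `[0,1]` to `p̄·δ₀ + (1-p̄)·δ₁`. -/
theorem random_stratified_empirical_weak_convergence
    {Ω : Type*} [MeasurableSpace Ω] (μ : Measure Ω) [IsProbabilityMeasure μ]
    (P : ℕ → Ω → ℝ)
    (hmeas : ∀ n, Measurable (P n))
    (hindep : iIndepFun P μ)
    (hident : ∀ n, IdentDistrib (P n) (P 1) μ μ)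
    (hrange : ∀ n ω, P n ω ∈ Set.Icc (0 : ℝ) 1)
    (pbar : ℝ) (hpbar : pbar = ∫ ω, P 1 ω ∂μ)
    (A : ℕ → ℕ → Ω → ℝ)
    (hA0 : ∀ n ω, A n 0 ω = 0) (hA1 : ∀ n ω, A n (n + 1) ω = 1)
    (hArec : ∀ n k, 1 ≤ n → 1 ≤ k → k ≤ n → ∀ ω,
      A n k ω = P n ω * A (n - 1) (k - 1) ω + (1 - P n ω) * A (n - 1) k ω) :
    ∀ᵐ ω ∂μ, ∀ f : BoundedContinuousFunction ℝ ℝ,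
      Tendsto (fun n : ℕ => (1 / (n : ℝ)) * ∑ k ∈ Finset.Icc 1 n, f (A n k ω)) atTop
        (𝓝 (pbar * f 0 + (1 - pbar) * f 1)) := by
  classical
  have hint : Integrable (P 1) μ := by
    refine (integrable_const (1:ℝ)).mono' (hmeas 1).aestronglyMeasurable ?_
    refine ae_of_all _ fun ω => ?_
    have := hrange 1 ω
    rw [Real.norm_eq_abs, abs_le]
    exact ⟨by linarith [this.1], this.2⟩
  have hslln := strong_law_ae_real (fun i => P (i+1)) hint
    (fun i j hij => hindep.indepFun (show i+1 ≠ j+1 by omega))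
    (fun i => hident (i+1))
  rw [← hpbar] at hslln
  filter_upwards [hslln] with ω hω
  intro f
  set a : ℕ → ℕ → ℝ := fun n k => A n k ω with ha
  set p : ℕ → ℝ := fun n => P n ω with hpdef
  have hp : ∀ n, 0 ≤ p n ∧ p n ≤ 1 := fun n => ⟨(hrange n ω).1, (hrange n ω).2⟩
  have h0 : ∀ n, a n 0 = 0 := fun n => hA0 n ω
  have h1 : ∀ n, a n (n+1) = 1 := fun n => hA1 n ω
  have hrec : ∀ n j, j ≤ n → a (n+1) (j+1) = p (n+1) * a n j + (1 - p (n+1)) * a n (j+1) := by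
    intro n j hj
    have := hArec (n+1) (j+1) (by omega) (by omega) (by omega) ω
    simpa using this
  set B : ℝ := ‖f‖ with hBdef
  have hB : ∀ x : ℝ, |f x| ≤ B := fun x => by
    have := f.norm_coe_le_norm x
    rwa [Real.norm_eq_abs] at this
  have hB0 : 0 ≤ B := le_trans (abs_nonneg _) (hB 0)
  set L : ℝ := pbar * f 0 + (1 - pbar) * f 1 with hL
  rw [Metric.tendsto_atTop]
  intro δ hδ
  obtain ⟨ε0, hε0, hc0⟩ := Metric.continuous_iff.mp f.continuous 0 (δ/8) (by linarith)
  obtain ⟨ε1, hε1, hc1⟩ := Metric.continuous_iff.mp f.continuous 1 (δ/8) (by linarith)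
  set ε : ℝ := min ε0 ε1 / 2 with hεdef
  have hεlt0 : ε < ε0 := by
    have h := min_le_left ε0 ε1
    have := lt_min hε0 hε1
    rw [hεdef]; linarith
  have hεlt1 : ε < ε1 := by
    have h := min_le_right ε0 ε1
    have := lt_min hε0 hε1
    rw [hεdef]; linarith
  have hε : 0 < ε := by
    have := lt_min hε0 hε1
    rw [hεdef]; linarith
  have hδ0 : ∀ x : ℝ, 0 ≤ x → x ≤ ε → |f x - f 0| ≤ δ/8 := by
    intro x hx1 hx2
    have hd : dist x 0 < ε0 := by
      rw [Real.dist_eq, sub_zero, abs_of_nonneg hx1]; linarith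
    have := hc0 x hd
    rw [Real.dist_eq] at this
    linarith
  have hδ1 : ∀ x : ℝ, 1 - ε ≤ x → x ≤ 1 → |f x - f 1| ≤ δ/8 := by
    intro x hx1 hx2
    have hd : dist x 1 < ε1 := by
      rw [Real.dist_eq, abs_lt]
      constructor <;> linarith
    have := hc1 x hd
    rw [Real.dist_eq] at this
    linarith
  -- eventual bounds
  have hrT := frag_r_over_n ε hε
  have hMT : Tendsto (fun n : ℕ => |(∑ i ∈ Finset.range n, p (i+1))/(n:ℝ) - pbar|) atTop (𝓝 0) := by
    have h' := (hω.sub_const pbar).abs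
    simpa using h'
  have t1 : Tendsto (fun n : ℕ => (2*(Real.sqrt ((n:ℝ)/(4*ε)) + 1)+1)/(n:ℝ)) atTop (𝓝 0) := by
    have h2 := (hrT.const_mul (2:ℝ)).add tendsto_one_div_atTop_nhds_zero_nat
    have h2' : Tendsto (fun n : ℕ => 2*((Real.sqrt ((n:ℝ)/(4*ε)) + 1)/(n:ℝ)) + 1/(n:ℝ))
        atTop (𝓝 0) := by simpa using h2
    apply Tendsto.congr' _ h2'
    filter_upwards [eventually_ge_atTop 1] with n hn
    have hn0 : ((n:ℝ)) ≠ 0 := by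
      have : (0:ℝ) < (n:ℝ) := by exact_mod_cast hn
      linarith
    field_simp
  have hF : Tendsto (fun n : ℕ =>
      2*B*((2*(Real.sqrt ((n:ℝ)/(4*ε)) + 1)+1)/(n:ℝ))
      + 2*B*((Real.sqrt ((n:ℝ)/(4*ε)) + 1)/(n:ℝ))
      + 2*B*|(∑ i ∈ Finset.range n, p (i+1))/(n:ℝ) - pbar|) atTop (𝓝 0) := by
    have := ((t1.const_mul (2*B)).add (hrT.const_mul (2*B))).add (hMT.const_mul (2*B))
    simpa using this
  have hev := hF.eventually_lt_const (show (0:ℝ) < δ/2 by linarith)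
  obtain ⟨N, hN⟩ := eventually_atTop.mp (hev.and (eventually_ge_atTop 1))
  refine ⟨N, fun n hn => ?_⟩
  obtain ⟨hFn, hn1⟩ := hN n hn
  have hn0 : (0:ℝ) < (n:ℝ) := by exact_mod_cast hn1
  have hmain := frag_main a p hp h0 h1 hrec (fun x => f x) B ε (δ/8) pbar hB hε hδ0 hδ1 n
  -- rewrite the Icc sum as a range sum
  have hsum : ∑ k ∈ Finset.Icc 1 n, f (a n k) = ∑ i ∈ Finset.range n, f (a n (i+1)) := by
    rw [show Finset.Icc 1 n = Finset.Ico 1 (n+1) from by rw [Finset.Ico_add_one_right_eq_Icc],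
        Finset.sum_Ico_eq_sum_range]
    refine Finset.sum_congr (by simp) fun i _ => by rw [show 1 + i = i + 1 from by omega]
  rw [hsum]
  have hd : dist ((1/(n:ℝ)) * ∑ i ∈ Finset.range n, f (a n (i+1))) L
      = |(∑ i ∈ Finset.range n, f (a n (i+1))) - (n:ℝ)*L| / n := by
    rw [Real.dist_eq,
      show (1/(n:ℝ)) * (∑ i ∈ Finset.range n, f (a n (i+1))) - L
        = ((∑ i ∈ Finset.range n, f (a n (i+1))) - (n:ℝ)*L)/(n:ℝ) from by field_simp,
      abs_div, abs_of_pos hn0]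
  rw [hd]
  have habs : |(∑ i ∈ Finset.range n, p (i+1)) - (n:ℝ)*pbar|
      = (n:ℝ) * |(∑ i ∈ Finset.range n, p (i+1))/(n:ℝ) - pbar| := by
    rw [show (∑ i ∈ Finset.range n, p (i+1)) - (n:ℝ)*pbar
        = (n:ℝ) * ((∑ i ∈ Finset.range n, p (i+1))/(n:ℝ) - pbar) from by field_simp,
      abs_mul, abs_of_pos hn0]
  rw [habs] at hmain
  have step1 : |(∑ i ∈ Finset.range n, f (a n (i+1))) - (n:ℝ)*L| / n
      ≤ ((n:ℝ)*(δ/8) + 2*B*(2*(Real.sqrt ((n:ℝ)/(4*ε)) + 1)+1)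
        + ((Real.sqrt ((n:ℝ)/(4*ε)) + 1)
          + (n:ℝ) * |(∑ i ∈ Finset.range n, p (i+1))/(n:ℝ) - pbar|) * (2*B))/(n:ℝ) := by
    exact (div_le_div_iff_of_pos_right hn0).mpr hmain
  have step2 : ((n:ℝ)*(δ/8) + 2*B*(2*(Real.sqrt ((n:ℝ)/(4*ε)) + 1)+1)
        + ((Real.sqrt ((n:ℝ)/(4*ε)) + 1)
          + (n:ℝ) * |(∑ i ∈ Finset.range n, p (i+1))/(n:ℝ) - pbar|) * (2*B))/(n:ℝ)
      = δ/8 + (2*B*((2*(Real.sqrt ((n:ℝ)/(4*ε)) + 1)+1)/(n:ℝ))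
      + 2*B*((Real.sqrt ((n:ℝ)/(4*ε)) + 1)/(n:ℝ))
      + 2*B*|(∑ i ∈ Finset.range n, p (i+1))/(n:ℝ) - pbar|) := by
    field_simp
    ring
  calc |(∑ i ∈ Finset.range n, f (a n (i+1))) - (n:ℝ)*L| / n
      ≤ δ/8 + (2*B*((2*(Real.sqrt ((n:ℝ)/(4*ε)) + 1)+1)/(n:ℝ))
      + 2*B*((Real.sqrt ((n:ℝ)/(4*ε)) + 1)/(n:ℝ))
      + 2*B*|(∑ i ∈ Finset.range n, p (i+1))/(n:ℝ) - pbar|) := step1.trans_eq step2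
    _ < δ/8 + δ/2 := by linarith [hFn]
    _ < δ := by linarith
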